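/- Let Δ ≥ 3 be odd and T_v a Δ-semiregular rooted tree of height two. In any star edge coloring of T_v with ⌊3Δ/2⌋ colors, every color appearing on an edge incident to the root v is used on exactly (Δ−1)/2 edges not incident to v, and every color not appearing at v is used on exactly Δ edges not incident to v. -/

import Mathlib

open SimpleGraph Finset

/-- A star edge coloring: a proper edge coloring with no bi-colored path or
cycle on four edges. -/
def IsStarEdgeColoring {V : Type*} (G : SimpleGraph V) (c : Sym2 V → ℕ) : Prop :=
  (∀ ⦃u v w : V⦄, G.Adj u v → G.Adj u w → v ≠ w → c s(u, v) ≠ c s(u, w)) ∧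
  (∀ v₀ v₁ v₂ v₃ v₄ : V, G.Adj v₀ v₁ → G.Adj v₁ v₂ → G.Adj v₂ v₃ → G.Adj v₃ v₄ →
    v₀ ≠ v₁ → v₀ ≠ v₂ → v₀ ≠ v₃ → v₁ ≠ v₂ → v₁ ≠ v₃ → v₂ ≠ v₃ →
    v₄ ≠ v₁ → v₄ ≠ v₂ → v₄ ≠ v₃ →
    ¬(c s(v₀, v₁) = c s(v₂, v₃) ∧ c s(v₁, v₂) = c s(v₃, v₄)))

/-- `G` has a star edge coloring using colors `0, …, k-1`. -/
def StarColorable {V : Type*} (G : SimpleGraph V) (k : ℕ) : Prop :=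
  ∃ c : Sym2 V → ℕ, (∀ ⦃u v : V⦄, G.Adj u v → c s(u, v) < k) ∧ IsStarEdgeColoring G c

/-- The star chromatic index of `G`. -/
noncomputable def starChromaticIndex {V : Type*} (G : SimpleGraph V) : ℕ :=
  sInf {k | StarColorable G k}

/-- A cactus: every edge belongs to at most one cycle, i.e. any two cycles
through a common edge have the same edge set. -/
def IsCactus {V : Type*} (G : SimpleGraph V) : Prop :=
  ∀ ⦃u w : V⦄ (p : G.Walk u u) (q : G.Walk w w), p.IsCycle → q.IsCycle →
    ∀ e : Sym2 V, e ∈ p.edges → e ∈ q.edges →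
      {e' | e' ∈ p.edges} = {e' | e' ∈ q.edges}

lemma aux_forced {α : Type*} [DecidableEq α] {s : Finset α} {g : α → ℕ} {m : ℕ}
    (h1 : ∀ a ∈ s, m ≤ g a) (h2 : ∑ a ∈ s, g a ≤ s.card * m) :
    ∀ a ∈ s, g a = m := by
  intro a ha
  by_contra hne
  have hga : m + 1 ≤ g a := by have := h1 a ha; omega
  have h3 : (s.erase a).card * m ≤ ∑ b ∈ s.erase a, g b := by
    calc (s.erase a).card * m = ∑ _b ∈ s.erase a, m := by rw [Finset.sum_const, smul_eq_mul]
    _ ≤ ∑ b ∈ s.erase a, g b := Finset.sum_le_sum (fun b hb => h1 b (Finset.mem_of_mem_erase hb))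
  have h4 : g a + ∑ b ∈ s.erase a, g b = ∑ b ∈ s, g b := Finset.add_sum_erase s g ha
  have hcard : 1 ≤ s.card := Finset.card_pos.mpr ⟨a, ha⟩
  have h5 : (s.erase a).card = s.card - 1 := Finset.card_erase_of_mem ha
  rw [h5] at h3
  have h6 : s.card - 1 + 1 = s.card := by omega
  have h7 : (s.card - 1) * m + m = s.card * m := by
    calc (s.card - 1) * m + m = (s.card - 1 + 1) * m := by ring
    _ = s.card * m := by rw [h6]
  omega

/-- Lemma 4.1(b): every color at the root is used on exactly `(Δ-1)/2` edges not
incident to the root, and every other color on exactly `Δ` such edges. -/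
theorem count_colors_away_from_root {V : Type*} [Fintype V] [DecidableEq V] (G : SimpleGraph V)
    [DecidableRel G.Adj] (v : V) (Δ : ℕ) (hΔ3 : 3 ≤ Δ) (hodd : Odd Δ)
    (htree : G.IsTree) (hheight : ∀ u : V, G.dist v u ≤ 2)
    (hdegv : G.degree v = Δ) (hdeg : ∀ u : V, G.Adj v u → G.degree u = Δ)
    (c : Sym2 V → ℕ) (hc : IsStarEdgeColoring G c)
    (hlt : ∀ ⦃a b : V⦄, G.Adj a b → c s(a, b) < 3 * Δ / 2) :
    (∀ i : ℕ, i ∈ (G.neighborFinset v).image (fun w => c s(v, w)) →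
      (G.edgeFinset.filter fun e => c e = i ∧ v ∉ e).card = (Δ - 1) / 2) ∧
    (∀ i : ℕ, i < 3 * Δ / 2 →
      i ∉ (G.neighborFinset v).image (fun w => c s(v, w)) →
      (G.edgeFinset.filter fun e => c e = i ∧ v ∉ e).card = Δ) := by
  classical
  obtain ⟨m, hm⟩ := hodd
  have hm1 : 1 ≤ m := by omega
  have hk : 3 * Δ / 2 = 3 * m + 1 := by omega
  -- tree helpers
  have hadj1 : ∀ {a b : V} (p : G.Walk a b), p.length = 1 → G.Adj a b := by
    intro a b p hp
    cases p with
    | nil => simp at hp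
    | cons h q =>
      simp [Walk.length_cons] at hp
      exact (hp.eq) ▸ h
  have hnoTri : ∀ {a b : V}, G.Adj v a → G.Adj v b → ¬ G.Adj a b := by
    intro a b hva hvb hab
    have hp1 : (Walk.cons hab Walk.nil).IsPath := by simp [hab.ne]
    have hp2 : (Walk.cons hva.symm (Walk.cons hvb Walk.nil)).IsPath := by
      simp [Walk.cons_isPath_iff]
      exact ⟨hvb.ne, hva.ne', hab.ne⟩
    have heq := (htree.existsUnique_path a b).unique hp1 hp2
    have := congrArg Walk.length heq
    simp at this
  have hclassify : ∀ {a b : V}, G.Adj a b → a ≠ v → b ≠ v → G.Adj v a ∨ G.Adj v b := by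
    have h2 : ∀ x : V, x ≠ v → ¬ G.Adj v x → ∃ y, G.Adj v y ∧ G.Adj y x := by
      intro x hx hnx
      have hdx : G.dist v x ≠ 0 :=
        SimpleGraph.dist_ne_zero_iff_ne_and_reachable.mpr
          ⟨fun h => hx h.symm, htree.isConnected.preconnected v x⟩
      obtain ⟨p, hp⟩ := SimpleGraph.exists_walk_of_dist_ne_zero hdx
      have hle : p.length ≤ 2 := by rw [hp]; exact hheight x
      cases p with
      | nil => simp at hdx
      | cons h q =>
        simp only [Walk.length_cons] at hle
        rcases Nat.lt_or_ge q.length 1 with h0 | h1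
        · have hq0 : q.length = 0 := by omega
          exact absurd ((Walk.eq_of_length_eq_zero hq0) ▸ h) hnx
        · have hq1 : q.length = 1 := by omega
          exact ⟨_, h, hadj1 q hq1⟩
    intro a b hab ha hb
    by_contra hcon
    push_neg at hcon
    obtain ⟨hna, hnb⟩ := hcon
    obtain ⟨x, hvx, hxa⟩ := h2 a ha hna
    obtain ⟨y, hvy, hyb⟩ := h2 b hb hnb
    have hp1 : (Walk.cons hvy (Walk.cons hyb Walk.nil)).IsPath := by
      simp [Walk.cons_isPath_iff]
      exact ⟨hyb.ne, hvy.ne, fun h => hb h.symm⟩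
    have hp2 : (Walk.cons hvx (Walk.cons hxa (Walk.cons hab Walk.nil))).IsPath := by
      simp [Walk.cons_isPath_iff]
      exact ⟨⟨hab.ne, hxa.ne, fun h => hnb (h ▸ hvx)⟩, hvx.ne, fun h => ha h.symm,
        fun h => hb h.symm⟩
    have heq := (htree.existsUnique_path v b).unique hp1 hp2
    have := congrArg Walk.length heq
    simp at this
  -- basic sets
  set N := G.neighborFinset v with hN
  set cv : V → ℕ := fun u => c s(v, u) with hcvdef
  set L : V → Finset V := fun u => G.neighborFinset u \ {v} with hLdef
  set f : V → Finset ℕ := fun u => (L u).image (fun w => c s(u, w)) with hfdef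
  set A := N.image cv with hA
  have hNmem : ∀ u : V, u ∈ N ↔ G.Adj v u := fun u => by rw [hN, mem_neighborFinset]
  have hLmem : ∀ u w : V, w ∈ L u ↔ G.Adj u w ∧ w ≠ v := fun u w => by
    simp only [hLdef, mem_sdiff, mem_neighborFinset, mem_singleton]
  have hNcard : N.card = 2 * m + 1 := by
    rw [hN, G.card_neighborFinset_eq_degree, hdegv]; omega
  have hLcard : ∀ u : V, G.Adj v u → (L u).card = 2 * m := by
    intro u hu
    have hv : {v} ⊆ G.neighborFinset u := by
      simp only [Finset.singleton_subset_iff, mem_neighborFinset]; exact hu.symm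
    simp only [hLdef]
    rw [Finset.card_sdiff_of_subset hv, G.card_neighborFinset_eq_degree, hdeg u hu,
      Finset.card_singleton]
    omega
  have hinjL : ∀ u : V, Set.InjOn (fun w => c s(u, w)) ↑(L u) := by
    intro u w hw w' hw' hcc
    by_contra hne
    exact hc.1 ((hLmem u w).mp (Finset.mem_coe.mp hw)).1
      ((hLmem u w').mp (Finset.mem_coe.mp hw')).1 hne hcc
  have hfcard : ∀ u : V, G.Adj v u → (f u).card = 2 * m := by
    intro u hu
    simp only [hfdef]
    rw [Finset.card_image_of_injOn (hinjL u), hLcard u hu]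
  have hfsub : ∀ u : V, G.Adj v u → f u ⊆ range (3 * m + 1) := by
    intro u hu i hi
    simp only [hfdef, mem_image] at hi
    obtain ⟨w, hw, rfl⟩ := hi
    rw [mem_range, ← hk]
    exact hlt ((hLmem u w).mp hw).1
  have hcvlt : ∀ u : V, G.Adj v u → cv u < 3 * m + 1 := by
    intro u hu
    simp only [hcvdef]
    rw [← hk]
    exact hlt hu
  have hAsub : A ⊆ range (3 * m + 1) := by
    rw [hA]
    intro i hi
    obtain ⟨u, hu, rfl⟩ := Finset.mem_image.mp hi
    exact Finset.mem_range.mpr (hcvlt u ((hNmem u).mp hu))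
  have hcvinj : Set.InjOn cv ↑N := by
    intro u hu u' hu' h
    by_contra hne
    simp only [hcvdef] at h
    exact hc.1 ((hNmem u).mp (Finset.mem_coe.mp hu))
      ((hNmem u').mp (Finset.mem_coe.mp hu')) hne h
  have hAcard : A.card = 2 * m + 1 := by
    rw [hA, Finset.card_image_of_injOn hcvinj, hNcard]
  have hcvf : ∀ u : V, G.Adj v u → cv u ∉ f u := by
    intro u hu hmem
    simp only [hfdef, mem_image] at hmem
    obtain ⟨w, hw, hcw⟩ := hmem
    have hwv := (hLmem u w).mp hw
    apply hc.1 hu.symm hwv.1 (fun h => hwv.2 h.symm)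
    rw [hcw]
    simp only [hcvdef]
    rw [Sym2.eq_swap]
  have hstar2 : ∀ u u' : V, G.Adj v u → G.Adj v u' → u ≠ u' →
      cv u' ∈ f u → cv u ∈ f u' → False := by
    intro u u' hu hu' hne h1 h2
    simp only [hfdef, mem_image] at h1 h2
    obtain ⟨w, hw, hcw⟩ := h1
    obtain ⟨w', hw', hcw'⟩ := h2
    have hwv := (hLmem u w).mp hw
    have hwv' := (hLmem u' w').mp hw'
    refine hc.2 w u v u' w' hwv.1.symm hu.symm hu' hwv'.1 hwv.1.ne' hwv.2
      (fun h => hnoTri hu hu' (h ▸ hwv.1)) hu.ne' hne hu'.ne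
      (fun h => hnoTri hu' hu (h ▸ hwv'.1)) hwv'.2 hwv'.1.ne' ⟨?_, ?_⟩
    · rw [Sym2.eq_swap, hcw]
    · rw [hcw']
      simp only [hcvdef]
      rw [Sym2.eq_swap]
  -- edge classification
  have hclass : ∀ e : Sym2 V, e ∈ G.edgeSet → v ∉ e →
      ∃ u w, G.Adj v u ∧ w ∈ L u ∧ e = s(u, w) := by
    intro e
    induction e using Sym2.ind with
    | _ a b =>
      intro he hv
      rw [mem_edgeSet] at he
      rw [Sym2.mem_iff] at hv
      push_neg at hv
      rcases hclassify he (fun h => hv.1 h.symm) (fun h => hv.2 h.symm) with h | h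
      · exact ⟨a, b, h, (hLmem a b).mpr ⟨he, fun h' => hv.2 h'.symm⟩, rfl⟩
      · exact ⟨b, a, h, (hLmem b a).mpr ⟨he.symm, fun h' => hv.1 h'.symm⟩, Sym2.eq_swap⟩
  -- the count formula
  have hcount : ∀ i : ℕ, (G.edgeFinset.filter fun e => c e = i ∧ v ∉ e).card
      = (N.filter fun u => i ∈ f u).card := by
    intro i
    have hdisjU : ∀ u ∈ N, ∀ u' ∈ N, u ≠ u' →
        Disjoint (((L u).filter fun w => c s(u, w) = i).image (fun w => s(u, w)))
          (((L u').filter fun w => c s(u', w) = i).image (fun w => s(u', w))) := by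
      intro u hu u' hu' hne
      rw [Finset.disjoint_left]
      intro e he he'
      obtain ⟨w, hw, rfl⟩ := Finset.mem_image.mp he
      obtain ⟨w', hw', heq⟩ := Finset.mem_image.mp he'
      rcases Sym2.eq_iff.mp heq with ⟨h1, h2⟩ | ⟨h1, h2⟩
      · exact hne (h1.symm)
      · have hwL := (hLmem u' w').mp (Finset.mem_of_mem_filter _ hw')
        rw [h2] at hwL
        exact hnoTri ((hNmem u').mp hu') ((hNmem u).mp hu) hwL.1
    have hbij : G.edgeFinset.filter (fun e => c e = i ∧ v ∉ e)
        = N.biUnion (fun u => ((L u).filter fun w => c s(u, w) = i).image (fun w => s(u, w))) := by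
      ext e
      simp only [mem_filter, mem_biUnion, mem_image, mem_edgeFinset]
      constructor
      · rintro ⟨he, hci, hve⟩
        obtain ⟨u, w, hu, hw, rfl⟩ := hclass e he hve
        exact ⟨u, (hNmem u).mpr hu, w, ⟨hw, hci⟩, rfl⟩
      · rintro ⟨u, hu, w, ⟨hw, hci⟩, rfl⟩
        have hwl := (hLmem u w).mp hw
        have hvu := (hNmem u).mp hu
        refine ⟨hwl.1, hci, ?_⟩
        rw [Sym2.mem_iff]
        push_neg
        exact ⟨hvu.ne, fun h => hwl.2 h.symm⟩
    rw [hbij, Finset.card_biUnion hdisjU]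
    have h1 : ∀ u ∈ N, (((L u).filter fun w => c s(u, w) = i).image (fun w => s(u, w))).card
        = if i ∈ f u then 1 else 0 := by
      intro u hu
      have hinj2 : Set.InjOn (fun w => s(u, w)) ↑((L u).filter fun w => c s(u, w) = i) := by
        intro w hw w' hw' heq
        rcases Sym2.eq_iff.mp heq with ⟨_, h2⟩ | ⟨h1, h2⟩
        · exact h2
        · have hwL := (hLmem u w).mp
            (Finset.mem_of_mem_filter _ (Finset.mem_coe.mp hw))
          rw [← h2] at hwL
          exact absurd hwL.1 (G.irrefl)
      rw [Finset.card_image_of_injOn hinj2]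
      by_cases hi : i ∈ f u
      · rw [if_pos hi]
        have hi' := hi
        simp only [hfdef, mem_image] at hi'
        obtain ⟨w, hw, hcw⟩ := hi'
        rw [Finset.card_eq_one]
        refine ⟨w, ?_⟩
        ext w'
        simp only [mem_filter, mem_singleton]
        constructor
        · rintro ⟨hw', hc'⟩
          exact hinjL u (Finset.mem_coe.mpr hw') (Finset.mem_coe.mpr hw) (by simp only [hc', hcw])
        · rintro rfl
          exact ⟨hw, hcw⟩
      · rw [if_neg hi, Finset.card_eq_zero, Finset.filter_eq_empty_iff]
        intro w hw hcw
        exact hi (by simp only [hfdef, mem_image]; exact ⟨w, hw, hcw⟩)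
    rw [Finset.sum_congr rfl h1]
    exact (Finset.card_filter _ _).symm
  -- the double counting set
  set P := (N ×ˢ N).filter (fun p : V × V => cv p.1 ∈ f p.2) with hPdef
  have hsum2 : P.card = ∑ u ∈ N, (N.filter fun u' => cv u' ∈ f u).card := by
    rw [hPdef, Finset.card_filter, Finset.sum_product, Finset.sum_comm]
    exact Finset.sum_congr rfl (fun u _ => (Finset.card_filter _ _).symm)
  have hc2 : (range (3 * m + 1) \ A).card = m := by
    rw [Finset.card_sdiff_of_subset hAsub, Finset.card_range, hAcard]
    omega
  have hab : ∀ u : V, G.Adj v u →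
      (N.filter fun u' => cv u' ∈ f u).card + ((f u) \ A).card = 2 * m := by
    intro u hu
    have e1 : (A.filter fun j => j ∈ f u).card = (N.filter fun u' => cv u' ∈ f u).card := by
      rw [hA, Finset.filter_image,
        Finset.card_image_of_injOn (hcvinj.mono (Finset.coe_subset.mpr (Finset.filter_subset _ _)))]
    have e2 : (A.filter fun j => j ∈ f u).card = (f u ∩ A).card := by
      rw [Finset.filter_mem_eq_inter, Finset.inter_comm]
    have e3 : (f u ∩ A).card + (f u \ A).card = (f u).card :=
      Finset.card_inter_add_card_sdiff _ _
    rw [← e1, e2, e3]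
    exact hfcard u hu
  have hsdle : ∀ u : V, G.Adj v u → ((f u) \ A).card ≤ m := by
    intro u hu
    have hss : (f u) \ A ⊆ range (3 * m + 1) \ A :=
      Finset.sdiff_subset_sdiff (hfsub u hu) (Finset.Subset.refl A)
    calc ((f u) \ A).card ≤ (range (3 * m + 1) \ A).card := Finset.card_le_card hss
    _ = m := hc2
  have hlb : ∀ u ∈ N, m ≤ (N.filter fun u' => cv u' ∈ f u).card := by
    intro u hu
    have h := hab u ((hNmem u).mp hu)
    have h' := hsdle u ((hNmem u).mp hu)
    omega
  have hPsub : P ⊆ N.offDiag := by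
    intro p hp
    rw [hPdef, Finset.mem_filter] at hp
    have h1 := Finset.mem_product.mp hp.1
    rw [Finset.mem_offDiag]
    refine ⟨h1.1, h1.2, ?_⟩
    intro h
    exact hcvf p.2 ((hNmem p.2).mp h1.2) (h ▸ hp.2)
  have hswap_sub : P.image Prod.swap ⊆ N.offDiag := by
    intro p hp
    obtain ⟨q, hq, rfl⟩ := Finset.mem_image.mp hp
    have h := Finset.mem_offDiag.mp (hPsub hq)
    exact Finset.mem_offDiag.mpr ⟨h.2.1, h.1, fun h' => h.2.2 h'.symm⟩
  have hdisjPS : Disjoint P (P.image Prod.swap) := by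
    rw [Finset.disjoint_left]
    intro p hp hp'
    obtain ⟨q, hq, hqe⟩ := Finset.mem_image.mp hp'
    have hoff := Finset.mem_offDiag.mp (hPsub hp)
    rw [hPdef, Finset.mem_filter] at hp hq
    have h1 : q.1 = p.2 := by rw [← hqe]; rfl
    have h2 : q.2 = p.1 := by rw [← hqe]; rfl
    apply hstar2 p.2 p.1 ((hNmem p.2).mp hoff.2.1) ((hNmem p.1).mp hoff.1)
      (fun h => hoff.2.2 h.symm) hp.2
    rw [← h1, ← h2]
    exact hq.2
  have hswapcard : (P.image Prod.swap).card = P.card :=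
    Finset.card_image_of_injective _ Prod.swap_injective
  have hOD : (N.offDiag).card = (2 * m + 1) * (2 * m) := by
    rw [Finset.offDiag_card, hNcard]
    have hexp : (2 * m + 1) * (2 * m + 1) = (2 * m + 1) * (2 * m) + (2 * m + 1) := by ring
    omega
  have hPub : P.card + P.card ≤ (2 * m + 1) * (2 * m) := by
    have h1 := Finset.card_le_card (Finset.union_subset hPsub hswap_sub)
    rw [Finset.card_union_of_disjoint hdisjPS, hswapcard, hOD] at h1
    omega
  have hsum_ub : ∑ u ∈ N, (N.filter fun u' => cv u' ∈ f u).card ≤ N.card * m := by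
    rw [← hsum2, hNcard]
    have hexp : (2 * m + 1) * (2 * m) = 2 * ((2 * m + 1) * m) := by ring
    omega
  have hau : ∀ u ∈ N, (N.filter fun u' => cv u' ∈ f u).card = m :=
    aux_forced hlb hsum_ub
  have hPcard_eq : P.card = (2 * m + 1) * m := by
    rw [hsum2, Finset.sum_congr rfl hau, Finset.sum_const, smul_eq_mul, hNcard]
  have hcomp : P ∪ P.image Prod.swap = N.offDiag := by
    apply Finset.eq_of_subset_of_card_le (Finset.union_subset hPsub hswap_sub)
    rw [Finset.card_union_of_disjoint hdisjPS, hswapcard, hOD, hPcard_eq]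
    have hexp : (2 * m + 1) * (2 * m) = 2 * ((2 * m + 1) * m) := by ring
    omega
  -- colors not at the root fill each neighbor
  have hBfull : ∀ u : V, G.Adj v u → ∀ i : ℕ, i < 3 * m + 1 → i ∉ A → i ∈ f u := by
    intro u hu i hik hiA
    have hss : (f u) \ A ⊆ range (3 * m + 1) \ A :=
      Finset.sdiff_subset_sdiff (hfsub u hu) (Finset.Subset.refl A)
    have hcard1 : ((f u) \ A).card = m := by
      have h := hab u hu
      have h' := hau u ((hNmem u).mpr hu)
      omega
    have heq : (f u) \ A = range (3 * m + 1) \ A :=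
      Finset.eq_of_subset_of_card_le hss (by rw [hcard1, hc2])
    have hmem : i ∈ (f u) \ A := by
      rw [heq]
      exact Finset.mem_sdiff.mpr ⟨Finset.mem_range.mpr hik, hiA⟩
    exact (Finset.mem_sdiff.mp hmem).1
  constructor
  · intro i hi
    rw [hcount i]
    rw [hA] at hi
    obtain ⟨u₀, hu₀, rfl⟩ := Finset.mem_image.mp hi
    have hΔm : (Δ - 1) / 2 = m := by omega
    rw [hΔm]
    have hvu₀ := (hNmem u₀).mp hu₀
    have hIcard : (N.filter fun u => cv u ∈ f u₀).card = m := hau u₀ hu₀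
    have hdisjOI : Disjoint (N.filter fun u => cv u₀ ∈ f u) (N.filter fun u => cv u ∈ f u₀) := by
      rw [Finset.disjoint_left]
      intro u huO huI
      rw [Finset.mem_filter] at huO huI
      have hvu := (hNmem u).mp huO.1
      have hne : u ≠ u₀ := by
        rintro rfl
        exact hcvf u hvu huO.2
      exact hstar2 u u₀ hvu hvu₀ hne huO.2 huI.2
    have hunion : (N.filter fun u => cv u₀ ∈ f u) ∪ (N.filter fun u => cv u ∈ f u₀)
        = N.erase u₀ := by
      ext u
      simp only [Finset.mem_union, Finset.mem_filter, Finset.mem_erase]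
      constructor
      · rintro (⟨hu, hf'⟩ | ⟨hu, hf'⟩)
        · exact ⟨fun h => hcvf u₀ hvu₀ (h ▸ hf'), hu⟩
        · exact ⟨fun h => hcvf u₀ hvu₀ (h ▸ hf'), hu⟩
      · rintro ⟨hne, hu⟩
        have hoff : (u₀, u) ∈ N.offDiag :=
          Finset.mem_offDiag.mpr ⟨hu₀, hu, fun h => hne h.symm⟩
        rw [← hcomp] at hoff
        rcases Finset.mem_union.mp hoff with h | h
        · rw [hPdef, Finset.mem_filter] at h
          exact Or.inl ⟨hu, h.2⟩
        · obtain ⟨q, hq, hqe⟩ := Finset.mem_image.mp h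
          rw [hPdef, Finset.mem_filter] at hq
          have h1 : q.1 = u := congrArg Prod.snd hqe
          have h2 : q.2 = u₀ := congrArg Prod.fst hqe
          refine Or.inr ⟨hu, ?_⟩
          rw [← h1, ← h2]
          exact hq.2
    have hcards : (N.filter fun u => cv u₀ ∈ f u).card
        + (N.filter fun u => cv u ∈ f u₀).card = 2 * m := by
      rw [← Finset.card_union_of_disjoint hdisjOI, hunion, Finset.card_erase_of_mem hu₀, hNcard]
      omega
    omega
  · intro i hik hiA
    rw [hcount i]
    rw [hA] at hiA
    rw [hk] at hik
    have hfull : N.filter (fun u => i ∈ f u) = N :=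
      Finset.filter_true_of_mem (fun u hu => hBfull u ((hNmem u).mp hu) i hik hiA)
    rw [hfull, hNcard]
    omega
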